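/- Let S be a real symplectic 2n×2n matrix (SᵀJS = J) and w = diag(ω₁,…,ωₙ) with all ωⱼ > 0, and set B = Sᵀ(w⊕w)S. For B' real symmetric, [JB, JB'] = 0 implies that the matrix B̃ = S⁻ᵀ B' S⁻¹ has the block form [[x̃, ỹ],[-ỹ, x̃]] with x̃ symmetric, ỹ antisymmetric, and both x̃ and ỹ commuting with w. -/
import Mathlib

open Matrix

theorem block_structure_of_commuting_hessian
    (n : ℕ) (S : Matrix (Fin n ⊕ Fin n) (Fin n ⊕ Fin n) ℝ)
    (J : Matrix (Fin n ⊕ Fin n) (Fin n ⊕ Fin n) ℝ)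
    (hJ : J = Matrix.fromBlocks 0 1 (-1) 0)
    (hS : Sᵀ * J * S = J)
    (w : Fin n → ℝ) (hw : ∀ j, 0 < w j)
    (B B' : Matrix (Fin n ⊕ Fin n) (Fin n ⊕ Fin n) ℝ)
    (hB : B = Sᵀ * Matrix.fromBlocks (Matrix.diagonal w) 0 0 (Matrix.diagonal w) * S)
    (hB' : B'.IsSymm)
    (hcomm : (J * B) * (J * B') = (J * B') * (J * B)) :
    ∃ x y : Matrix (Fin n) (Fin n) ℝ,
      x.IsSymm ∧ yᵀ = -y ∧
      x * Matrix.diagonal w = Matrix.diagonal w * x ∧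
      y * Matrix.diagonal w = Matrix.diagonal w * y ∧
      (Sᵀ)⁻¹ * B' * S⁻¹ = Matrix.fromBlocks x y (-y) x := by
  have hJJ : J * J = -1 := by
    subst hJ
    rw [Matrix.fromBlocks_multiply]
    simp [← Matrix.fromBlocks_one, Matrix.fromBlocks_neg]
  have hJ1 : J * (-J) = 1 := by rw [Matrix.mul_neg, hJJ, neg_neg]
  have hJdet : IsUnit J.det := Matrix.isUnit_det_of_right_inverse hJ1
  have hJinv : J⁻¹ = -J := Matrix.inv_eq_right_inv hJ1
  have hSdet : IsUnit S.det := by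
    have h := congrArg Matrix.det hS
    simp only [Matrix.det_mul, Matrix.det_transpose] at h
    rw [isUnit_iff_ne_zero]
    intro h0
    rw [h0] at h
    simp at h
    exact hJdet.ne_zero h.symm
  have hStdet : IsUnit Sᵀ.det := by rwa [Matrix.det_transpose]
  -- cancellation helpers
  have cS : ∀ (X : Matrix (Fin n ⊕ Fin n) (Fin n ⊕ Fin n) ℝ), S * (S⁻¹ * X) = X :=
    fun X => Matrix.mul_nonsing_inv_cancel_left _ _ hSdet
  have cS' : ∀ (X : Matrix (Fin n ⊕ Fin n) (Fin n ⊕ Fin n) ℝ), S⁻¹ * (S * X) = X :=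
    fun X => Matrix.nonsing_inv_mul_cancel_left _ _ hSdet
  have cT : ∀ (X : Matrix (Fin n ⊕ Fin n) (Fin n ⊕ Fin n) ℝ), Sᵀ * ((Sᵀ)⁻¹ * X) = X :=
    fun X => Matrix.mul_nonsing_inv_cancel_left _ _ hStdet
  have cT' : ∀ (X : Matrix (Fin n ⊕ Fin n) (Fin n ⊕ Fin n) ℝ), (Sᵀ)⁻¹ * (Sᵀ * X) = X :=
    fun X => Matrix.nonsing_inv_mul_cancel_left _ _ hStdet
  have hSSi : S * S⁻¹ = 1 := Matrix.mul_nonsing_inv _ hSdet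
  have hSiS : S⁻¹ * S = 1 := Matrix.nonsing_inv_mul _ hSdet
  have hTTi : Sᵀ * (Sᵀ)⁻¹ = 1 := Matrix.mul_nonsing_inv _ hStdet
  have hTiT : (Sᵀ)⁻¹ * Sᵀ = 1 := Matrix.nonsing_inv_mul _ hStdet
  have cJ : ∀ (X : Matrix (Fin n ⊕ Fin n) (Fin n ⊕ Fin n) ℝ), -J * (J * X) = X := by
    intro X
    rw [← mul_assoc, Matrix.neg_mul, hJJ, neg_neg, one_mul]
  -- h5 : S⁻¹ * J * Sᵀ⁻¹ = J
  have h5 : S⁻¹ * J * (Sᵀ)⁻¹ = J := by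
    have h := congrArg (fun M => M⁻¹) hS
    simp only [Matrix.mul_inv_rev, hJinv] at h
    rw [Matrix.neg_mul, Matrix.mul_neg, neg_inj, ← mul_assoc] at h
    exact h
  have hSJS : S * J * Sᵀ = J := by
    have h := congrArg (fun M => S * M * Sᵀ) h5
    simp only [mul_assoc, cS, cT, cT', hTiT, mul_one] at h
    rw [mul_assoc]
    exact h.symm
  have hSJ : ∀ (X : Matrix (Fin n ⊕ Fin n) (Fin n ⊕ Fin n) ℝ),
      S * (J * X) = J * ((Sᵀ)⁻¹ * X) := by
    intro X
    have : S * J = J * (Sᵀ)⁻¹ := by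
      have h' := congrArg (fun M => M * (Sᵀ)⁻¹) hSJS
      simpa only [Matrix.mul_nonsing_inv_cancel_right _ _ hStdet] using h'
    rw [← mul_assoc, this, mul_assoc]
  have hSiJ : ∀ (X : Matrix (Fin n ⊕ Fin n) (Fin n ⊕ Fin n) ℝ),
      S⁻¹ * (J * X) = J * (Sᵀ * X) := by
    intro X
    have : S⁻¹ * J = J * Sᵀ := by
      have h' := congrArg (fun M => M * Sᵀ) h5
      simpa only [Matrix.nonsing_inv_mul_cancel_right _ _ hStdet] using h'
    rw [← mul_assoc, this, mul_assoc]
  set W := Matrix.diagonal w with hW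
  set D := Matrix.fromBlocks W 0 0 W with hD
  set Bt := (Sᵀ)⁻¹ * B' * S⁻¹ with hBtdef
  have e1 : J * (Sᵀ * D * S) * (J * B') = J * Sᵀ * (D * J * Bt) * S := by
    rw [hBtdef]
    simp only [mul_assoc, hSJ, hSiS, mul_one]
  have e2 : (J * B') * (J * (Sᵀ * D * S)) = J * Sᵀ * (Bt * J * D) * S := by
    rw [hBtdef]
    simp only [mul_assoc, cT, hSiJ]
  have hmain : D * J * Bt = Bt * J * D := by
    have h := hcomm
    rw [hB, e1, e2] at h
    have h2 := congrArg (fun M => (Sᵀ)⁻¹ * (-J * M) * S⁻¹) h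
    simp only [mul_assoc, cJ, cT', hSSi, mul_one] at h2
    simpa [mul_assoc] using h2
  -- block decomposition
  obtain ⟨x, y, z, t, hxyzt⟩ : ∃ x y z t, Bt = Matrix.fromBlocks x y z t :=
    ⟨_, _, _, _, (Matrix.fromBlocks_toBlocks Bt).symm⟩
  rw [hJ, hD, hxyzt, Matrix.fromBlocks_multiply, Matrix.fromBlocks_multiply,
    Matrix.fromBlocks_multiply, Matrix.fromBlocks_multiply] at hmain
  simp only [Matrix.mul_zero, Matrix.zero_mul, Matrix.mul_one, Matrix.one_mul,
    Matrix.mul_neg, Matrix.neg_mul, add_zero, zero_add, Matrix.fromBlocks_inj] at hmain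
  obtain ⟨h11, h12, h21, h22⟩ := hmain
  simp only [neg_zero, zero_add] at h11 h12
  have h21' : W * x = t * W := neg_inj.mp h21
  have e1 : ∀ i j, w i * t i j = x i j * w j := by
    intro i j
    have h := congrFun (congrFun h12 i) j
    simpa [hW, Matrix.diagonal_mul, Matrix.mul_diagonal] using h
  have e2 : ∀ i j, w i * x i j = t i j * w j := by
    intro i j
    have h := congrFun (congrFun h21' i) j
    simpa [hW, Matrix.diagonal_mul, Matrix.mul_diagonal] using h
  have f1 : ∀ i j, w i * z i j = -(y i j * w j) := by
    intro i j
    have h := congrFun (congrFun h11 i) j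
    simpa [hW, Matrix.diagonal_mul, Matrix.mul_diagonal, Matrix.neg_apply] using h
  have f2 : ∀ i j, -(w i * y i j) = z i j * w j := by
    intro i j
    have h := congrFun (congrFun h22 i) j
    simpa [hW, Matrix.diagonal_mul, Matrix.mul_diagonal, Matrix.neg_apply] using h
  have hwx : ∀ i j, x i j * w j = w i * x i j := by
    intro i j
    rcases eq_or_ne (x i j) 0 with h0 | h0
    · simp [h0]
    · have key : w i * w i * x i j = w j * w j * x i j := by
        linear_combination w i * e2 i j + w j * e1 i j
      have h2 : w i * w i = w j * w j := mul_right_cancel₀ h0 key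
      have h3 : (w i - w j) * (w i + w j) = 0 := by linear_combination h2
      rcases mul_eq_zero.mp h3 with h4 | h4
      · have hij : w i = w j := by linarith
        rw [hij]; ring
      · have := hw i; have := hw j; linarith
  have htx : ∀ i j, t i j = x i j := by
    intro i j
    have h : t i j * w j = x i j * w j := by
      calc t i j * w j = w i * x i j := (e2 i j).symm
        _ = x i j * w j := (hwx i j).symm
    exact mul_right_cancel₀ (hw j).ne' h
  have hwy : ∀ i j, y i j * w j = w i * y i j := by
    intro i j
    rcases eq_or_ne (y i j) 0 with h0 | h0
    · simp [h0]
    · have key : w i * w i * y i j = w j * w j * y i j := by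
        linear_combination (-(w i)) * f2 i j + (-(w j)) * f1 i j
      have h2 : w i * w i = w j * w j := mul_right_cancel₀ h0 key
      have h3 : (w i - w j) * (w i + w j) = 0 := by linear_combination h2
      rcases mul_eq_zero.mp h3 with h4 | h4
      · have hij : w i = w j := by linarith
        rw [hij]; ring
      · have := hw i; have := hw j; linarith
  have hzy : ∀ i j, z i j = -(y i j) := by
    intro i j
    have h : z i j * w j = -(y i j) * w j := by
      calc z i j * w j = -(w i * y i j) := (f2 i j).symm
        _ = -(y i j * w j) := by rw [← hwy i j]
        _ = -(y i j) * w j := by ring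
    exact mul_right_cancel₀ (hw j).ne' h
  have hsym : Btᵀ = Bt := by
    rw [hBtdef]
    simp [Matrix.transpose_mul, Matrix.transpose_nonsing_inv, hB'.eq, mul_assoc]
  rw [hxyzt, Matrix.fromBlocks_transpose, Matrix.fromBlocks_inj] at hsym
  obtain ⟨hxsym, -, hyz, -⟩ := hsym
  refine ⟨x, y, hxsym, ?_, ?_, ?_, ?_⟩
  · rw [hyz]
    ext i j
    simp [hzy i j]
  · ext i j
    rw [hW, Matrix.mul_diagonal, Matrix.diagonal_mul]
    exact hwx i j
  · ext i j
    rw [hW, Matrix.mul_diagonal, Matrix.diagonal_mul]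
    exact hwy i j
  · rw [hxyzt, Matrix.fromBlocks_inj]
    refine ⟨rfl, rfl, ?_, ?_⟩
    · ext i j
      simp [hzy i j]
    · ext i j
      exact htx i j
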